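/- arXiv:2110.04814 — 2 statements merged into one kernel-verified Lean document; each statement's English description precedes it below -/
import Mathlib

section
/- Let P be twice differentiable with M-Lipschitz Hessian, and suppose ‖∇P(x_t) − g_t‖ ≤ C_g ε and ‖∇²P(x_t) − H_t‖ ≤ C_H √(Mε) with C_g = 1/192 and C_H = 1/48. Let s* minimize m(s) = g_tᵀs + ½ sᵀH_t s + (M/6)‖s‖³ and set x_{t+1} = x_t + s*. If x_{t+1} is not an (ε, √(Mε))-second-order stationary point of P (i.e. ‖∇P(x_{t+1})‖ > ε or λ_min(∇²P(x_{t+1})) < −√(Mε)), then ‖s*‖ ≥ (1/2)√(ε/M). -/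
open RealInnerProductSpace

/-- The cubic-regularized quadratic model built from a vector `g` and an operator `H`. -/
noncomputable def cubicModel {d : ℕ} (g : EuclideanSpace ℝ (Fin d))
    (H : EuclideanSpace ℝ (Fin d) →L[ℝ] EuclideanSpace ℝ (Fin d)) (M : ℝ)
    (s : EuclideanSpace ℝ (Fin d)) : ℝ :=
  ⟪g, s⟫ + 1 / 2 * ⟪s, H s⟫ + M / 6 * ‖s‖ ^ 3

lemma norm_cube_hasFDerivAt {E : Type*} [NormedAddCommGroup E] [InnerProductSpace ℝ E] (s : E) :
    HasFDerivAt (fun v : E => ‖v‖ ^ 3) ((3 * ‖s‖) • (innerSL ℝ s)) s := by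
  have hsq := (hasFDerivAt_id s).norm_sq
  have hr : HasDerivAt (fun t : ℝ => t ^ ((3:ℝ)/2)) (((3:ℝ)/2) * (‖s‖^2) ^ ((3:ℝ)/2 - 1)) (‖s‖^2) :=
    Real.hasDerivAt_rpow_const (Or.inr (by norm_num))
  have hcomp := hr.comp_hasFDerivAt s hsq
  simp only [Function.comp_def, id_eq] at hcomp
  have hfun : (fun v : E => (‖v‖^2) ^ ((3:ℝ)/2)) = fun v : E => ‖v‖ ^ 3 := by
    funext v
    rw [← Real.rpow_natCast ‖v‖ 2, ← Real.rpow_mul (norm_nonneg v), ← Real.rpow_natCast ‖v‖ 3]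
    norm_num
  rw [hfun] at hcomp
  refine hcomp.congr_fderiv ?_
  ext v
  have h1 : (‖s‖^2) ^ ((3:ℝ)/2 - 1) = ‖s‖ := by
    rw [← Real.rpow_natCast ‖s‖ 2, ← Real.rpow_mul (norm_nonneg s)]
    norm_num
  simp [h1]
  ring

lemma cubic_foc {d : ℕ} (M : ℝ) (gt : EuclideanSpace ℝ (Fin d))
    (Ht : EuclideanSpace ℝ (Fin d) →L[ℝ] EuclideanSpace ℝ (Fin d))
    (hHtSymm : ∀ u v, ⟪Ht u, v⟫ = ⟪u, Ht v⟫)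
    (s : EuclideanSpace ℝ (Fin d))
    (hmin : ∀ y, cubicModel gt Ht M s ≤ cubicModel gt Ht M y) :
    gt + Ht s + (M / 2 * ‖s‖) • s = 0 := by
  set w := gt + Ht s + (M / 2 * ‖s‖) • s with hw
  have hd : HasFDerivAt (cubicModel gt Ht M) (innerSL ℝ w) s := by
    have h1 : HasFDerivAt (fun v : EuclideanSpace ℝ (Fin d) => ⟪gt, v⟫) (innerSL ℝ gt) s :=
      (innerSL ℝ gt).hasFDerivAt
    have h2 := (hasFDerivAt_id s).inner ℝ (Ht.hasFDerivAt (x := s))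
    have h3 := norm_cube_hasFDerivAt s
    have := (h1.add ((h2.const_mul ((1:ℝ)/2)))).add ((h3.const_mul (M/6)))
    refine this.congr_fderiv ?_
    ext v
    simp [hw, inner_add_left, real_inner_smul_left, hHtSymm s v, real_inner_comm (Ht s) v,
      fderivInnerCLM_apply]
    ring
  have hloc : IsLocalMin (cubicModel gt Ht M) s := Filter.Eventually.of_forall hmin
  have h0 : (innerSL ℝ w) = 0 := hloc.hasFDerivAt_eq_zero hd
  have : ⟪w, w⟫ = (0:ℝ) := by
    have := congrArg (fun f => f w) h0; simpa using this
  exact inner_self_eq_zero.mp this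

lemma cubic_soc1 {d : ℕ} (M : ℝ) (gt : EuclideanSpace ℝ (Fin d))
    (Ht : EuclideanSpace ℝ (Fin d) →L[ℝ] EuclideanSpace ℝ (Fin d))
    (hHtSymm : ∀ u v, ⟪Ht u, v⟫ = ⟪u, Ht v⟫)
    (s : EuclideanSpace ℝ (Fin d))
    (hgt : ∀ u : EuclideanSpace ℝ (Fin d), ⟪gt, u⟫ = -⟪s, Ht u⟫ - (M / 2 * ‖s‖) * ⟪s, u⟫)
    (hmin : ∀ y, cubicModel gt Ht M s ≤ cubicModel gt Ht M y)
    (w : EuclideanSpace ℝ (Fin d)) (hsw : ⟪s, w⟫ ≠ 0) :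
    0 ≤ ⟪w, Ht w⟫ + M / 2 * ‖s‖ * ‖w‖ ^ 2 := by
  have hw0 : w ≠ 0 := by rintro rfl; simp at hsw
  have hnw : (0:ℝ) < ‖w‖ ^ 2 := by
    have := norm_pos_iff.mpr hw0; positivity
  set t : ℝ := -2 * ⟪s, w⟫ / ‖w‖ ^ 2 with ht
  have ht0 : t ≠ 0 := by
    simp only [ht, div_ne_zero_iff]
    exact ⟨by intro h; apply hsw; linarith, ne_of_gt hnw⟩
  have ht2 : (0:ℝ) < t ^ 2 := by positivity
  have hkey : 2 * t * ⟪s, w⟫ + t ^ 2 * ‖w‖ ^ 2 = 0 := by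
    rw [ht]; field_simp; ring
  have hnorm : ‖s + t • w‖ = ‖s‖ := by
    have h2 : ‖s + t • w‖ ^ 2 = ‖s‖ ^ 2 := by
      rw [norm_add_sq_real, real_inner_smul_right, norm_smul, mul_pow, Real.norm_eq_abs, sq_abs]
      linarith [hkey]
    have := congrArg Real.sqrt h2
    simpa [Real.sqrt_sq (norm_nonneg _)] using this
  have hWS : ⟪w, Ht s⟫ = ⟪s, Ht w⟫ := by rw [real_inner_comm, hHtSymm]
  have hexp := hmin (s + t • w)
  rw [cubicModel, cubicModel, hnorm] at hexp
  simp only [map_add, map_smul, inner_add_left, inner_add_right, real_inner_smul_left,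
    real_inner_smul_right] at hexp
  rw [hWS, hgt s, hgt w] at hexp
  have hkey2 : M / 2 * ‖s‖ * (2 * t * ⟪s, w⟫ + t ^ 2 * ‖w‖ ^ 2) = 0 := by rw [hkey, mul_zero]
  by_contra hcon
  push_neg at hcon
  nlinarith [hexp, hkey2, mul_pos ht2 (neg_pos.mpr hcon)]

lemma cubic_soc {d : ℕ} (M : ℝ) (hM : 0 < M) (gt : EuclideanSpace ℝ (Fin d))
    (Ht : EuclideanSpace ℝ (Fin d) →L[ℝ] EuclideanSpace ℝ (Fin d))
    (hHtSymm : ∀ u v, ⟪Ht u, v⟫ = ⟪u, Ht v⟫)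
    (s : EuclideanSpace ℝ (Fin d))
    (hfoc : gt + Ht s + (M / 2 * ‖s‖) • s = 0)
    (hmin : ∀ y, cubicModel gt Ht M s ≤ cubicModel gt Ht M y) :
    ∀ v, 0 ≤ ⟪v, Ht v⟫ + M / 2 * ‖s‖ * ‖v‖ ^ 2 := by
  have hgt : ∀ u : EuclideanSpace ℝ (Fin d), ⟪gt, u⟫ = -⟪s, Ht u⟫ - (M / 2 * ‖s‖) * ⟪s, u⟫ := by
    intro u
    have h := congrArg (fun z => ⟪z, u⟫) hfoc
    simp only [inner_add_left, real_inner_smul_left, inner_zero_left] at h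
    have hs : ⟪Ht s, u⟫ = ⟪s, Ht u⟫ := hHtSymm s u
    linarith
  intro v
  rcases eq_or_ne s 0 with rfl | hs0
  · -- s = 0 : then gt = 0 and 0 is min of quadratic plus cubic
    rcases eq_or_ne v 0 with rfl | hv0
    · simp
    simp only [norm_zero, mul_zero, zero_mul, zero_add]
    have hg0 : ∀ u, ⟪gt, u⟫ = (0:ℝ) := by
      intro u; rw [hgt u]; simp
    by_contra hcon
    push_neg at hcon
    set c : ℝ := -⟪v, Ht v⟫ with hc
    have hcpos : 0 < c := by simp only [hc]; linarith
    have hnv : (0:ℝ) < ‖v‖ ^ 3 := by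
      have := norm_pos_iff.mpr hv0; positivity
    set t : ℝ := c / (M * ‖v‖ ^ 3) with htdef
    have htpos : 0 < t := by positivity
    have hexp := hmin (t • v)
    rw [cubicModel, cubicModel] at hexp
    simp only [map_smul, inner_zero_left, inner_zero_right, real_inner_smul_left,
      real_inner_smul_right, norm_smul, norm_zero, hg0, mul_pow, Real.norm_eq_abs,
      abs_of_pos htpos] at hexp
    -- hexp : 0 ≤ t^2 * stuff
    have ht3 : M / 6 * (t ^ 3 * ‖v‖ ^ 3) = t ^ 2 * (c / 6) := by
      rw [htdef]; field_simp
    nlinarith [hexp, mul_pos (mul_pos htpos htpos) hcpos]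
  · -- s ≠ 0
    have hss : ⟪s, s⟫ ≠ (0:ℝ) := by
      simp only [real_inner_self_eq_norm_sq]
      have := norm_pos_iff.mpr hs0; positivity
    have hC : 0 ≤ ⟪s, Ht s⟫ + M / 2 * ‖s‖ * ‖s‖ ^ 2 :=
      cubic_soc1 M gt Ht hHtSymm s hgt hmin s hss
    rcases eq_or_ne (⟪s, v⟫ : ℝ) 0 with hsv | hsv
    · -- orthogonal case: approximate with v + α • s
      set A : ℝ := ⟪v, Ht v⟫ + M / 2 * ‖s‖ * ‖v‖ ^ 2 with hA
      set C : ℝ := ⟪s, Ht s⟫ + M / 2 * ‖s‖ * ‖s‖ ^ 2 with hCdef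
      have key : ∀ α : ℝ, α ≠ 0 → 0 ≤ A + α ^ 2 * C := by
        intro α hα
        have h1 := cubic_soc1 M gt Ht hHtSymm s hgt hmin (v + α • s) (by
          rw [inner_add_right, real_inner_smul_right, hsv]
          simpa using mul_ne_zero hα hss)
        have h2 := cubic_soc1 M gt Ht hHtSymm s hgt hmin (v - α • s) (by
          rw [inner_sub_right, real_inner_smul_right, hsv]
          simpa using mul_ne_zero hα hss)
        have hvs : ⟪v, s⟫ = (0:ℝ) := by rw [real_inner_comm]; exact hsv
        have e1 : ‖v + α • s‖ ^ 2 = ‖v‖ ^ 2 + α ^ 2 * ‖s‖ ^ 2 := by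
          rw [norm_add_sq_real, real_inner_smul_right, hvs, norm_smul, mul_pow,
            Real.norm_eq_abs, sq_abs]
          ring
        have e2 : ‖v - α • s‖ ^ 2 = ‖v‖ ^ 2 + α ^ 2 * ‖s‖ ^ 2 := by
          rw [norm_sub_sq_real, real_inner_smul_right, hvs, norm_smul, mul_pow,
            Real.norm_eq_abs, sq_abs]
          ring
        rw [e1] at h1
        rw [e2] at h2
        simp only [map_add, map_smul, map_sub, inner_add_left, inner_add_right,
          inner_sub_left, inner_sub_right, real_inner_smul_left, real_inner_smul_right] at h1 h2
        rw [hA, hCdef]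
        nlinarith [h1, h2]
      by_contra hcon
      push_neg at hcon
      have hCpos : 0 ≤ C := hC
      rcases le_or_gt C 0 with hCle | hCgt
      · have := key 1 one_ne_zero
        nlinarith
      · have hα : Real.sqrt (-A / (2 * C)) ≠ 0 := by
          have : 0 < -A / (2 * C) := by
            apply div_pos; linarith; linarith
          positivity
        have hsq : Real.sqrt (-A / (2 * C)) ^ 2 = -A / (2 * C) := by
          apply Real.sq_sqrt
          apply le_of_lt; apply div_pos; linarith; linarith
        have := key _ hα
        rw [hsq] at this
        have heq : (-A / (2 * C)) * C = -A / 2 := by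
          field_simp
        rw [heq] at this
        have h5 : (0:ℝ) ≤ A + -A / 2 := this
        have h6 : A < 0 := hcon
        clear_value A C
        linarith [h5, h6]
    · exact cubic_soc1 M gt Ht hHtSymm s hgt hmin v hsv

theorem step_norm_lower_bound_of_not_SOSP (d : ℕ) (M ε : ℝ) (hM : 0 < M) (hε : 0 < ε)
    (P : EuclideanSpace ℝ (Fin d) → ℝ) (hP : ContDiff ℝ 2 P)
    (hLip : ∀ x x', ‖fderiv ℝ (gradient P) x - fderiv ℝ (gradient P) x'‖ ≤ M * ‖x - x'‖)
    (xt : EuclideanSpace ℝ (Fin d)) (gt : EuclideanSpace ℝ (Fin d))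
    (Ht : EuclideanSpace ℝ (Fin d) →L[ℝ] EuclideanSpace ℝ (Fin d))
    (hHtSymm : ∀ u v, ⟪Ht u, v⟫ = ⟪u, Ht v⟫)
    (hg : ‖gradient P xt - gt‖ ≤ 1 / 192 * ε)
    (hH : ‖fderiv ℝ (gradient P) xt - Ht‖ ≤ 1 / 48 * Real.sqrt (M * ε))
    (sstar : EuclideanSpace ℝ (Fin d))
    (hmin : ∀ s, cubicModel gt Ht M sstar ≤ cubicModel gt Ht M s)
    (hnotSOSP : ¬ (‖gradient P (xt + sstar)‖ ≤ ε ∧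
      ∀ v : EuclideanSpace ℝ (Fin d),
        -(Real.sqrt (M * ε)) * ‖v‖ ^ 2 ≤ ⟪v, fderiv ℝ (gradient P) (xt + sstar) v⟫)) :
    1 / 2 * Real.sqrt (ε / M) ≤ ‖sstar‖ := by
  set a := Real.sqrt (M * ε) with hadef
  set b := Real.sqrt (ε / M) with hbdef
  have hb : 0 < b := Real.sqrt_pos.mpr (div_pos hε hM)
  have hb2 : b ^ 2 = ε / M := Real.sq_sqrt (le_of_lt (div_pos hε hM))
  have hε2 : ε = M * b ^ 2 := by rw [hb2]; field_simp
  have hab : a = M * b := by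
    rw [hadef, hbdef, show M * ε = M ^ 2 * (ε / M) by field_simp,
      Real.sqrt_mul (sq_nonneg M), Real.sqrt_sq hM.le]
  have ha : 0 < a := by rw [hab]; positivity
  set r := ‖sstar‖ with hrdef
  have hr0 : 0 ≤ r := norm_nonneg _
  -- optimality conditions
  have hfoc := cubic_foc M gt Ht hHtSymm sstar hmin
  have hsoc := cubic_soc M hM gt Ht hHtSymm sstar hfoc hmin
  rw [← hrdef] at hfoc
  have hsoc' : ∀ v, 0 ≤ ⟪v, Ht v⟫ + M / 2 * r * ‖v‖ ^ 2 := by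
    intro v; have := hsoc v; rwa [← hrdef] at this
  -- differentiability of the gradient
  set D := fderiv ℝ (gradient P) with hDdef
  have hgradCD : ContDiff ℝ 1 (gradient P) := by
    have h1 : ContDiff ℝ 1 (fderiv ℝ P) := hP.fderiv_right (by norm_num)
    exact (InnerProductSpace.toDual ℝ _).symm.contDiff.comp h1
  have hdiff : ∀ x, DifferentiableAt ℝ (gradient P) x :=
    fun x => (hgradCD.differentiable one_ne_zero).differentiableAt
  -- Taylor bound on the gradient
  have hT : ‖gradient P (xt + sstar) - gradient P xt - (D xt) sstar‖ ≤ (M * r) * r := by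
    have hconv : Convex ℝ (Metric.closedBall xt r) := convex_closedBall _ _
    have hx : xt ∈ Metric.closedBall xt r := Metric.mem_closedBall_self hr0
    have hy : xt + sstar ∈ Metric.closedBall xt r := by
      simp [Metric.mem_closedBall, dist_eq_norm, hrdef]
    have := hconv.norm_image_sub_le_of_norm_fderiv_le' (φ := D xt)
      (C := M * r) (f := gradient P) (fun x _ => hdiff x)
      (fun z hz => by
        calc ‖D z - D xt‖ ≤ M * ‖z - xt‖ := hLip z xt
          _ ≤ M * r := by
            apply mul_le_mul_of_nonneg_left _ (le_of_lt hM)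
            rw [← dist_eq_norm]
            exact Metric.mem_closedBall.mp hz) hx hy
    simpa using this
  have hLipD : ‖D (xt + sstar) - D xt‖ ≤ M * r := by
    have := hLip (xt + sstar) xt
    rwa [add_sub_cancel_left] at this
  clear_value a b D
  by_cases hg1 : ‖gradient P (xt + sstar)‖ ≤ ε
  · -- eigenvalue case
    push_neg at hnotSOSP
    obtain ⟨v, hv⟩ := hnotSOSP hg1
    have hv0 : v ≠ 0 := by
      rintro rfl
      simp at hv
    have hnv : (0:ℝ) < ‖v‖ ^ 2 := by
      have := norm_pos_iff.mpr hv0; positivity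
    have hdec : ⟪v, (D (xt + sstar)) v⟫ = ⟪v, Ht v⟫ + ⟪v, (D (xt + sstar) - Ht) v⟫ := by
      rw [ContinuousLinearMap.sub_apply, inner_sub_right]; ring
    have hopn : ‖D (xt + sstar) - Ht‖ ≤ M * r + a / 48 := by
      calc ‖D (xt + sstar) - Ht‖ ≤ ‖D (xt + sstar) - D xt‖ + ‖D xt - Ht‖ :=
            norm_sub_le_norm_sub_add_norm_sub _ _ _
        _ ≤ M * r + a / 48 := by
            apply add_le_add hLipD
            linarith only [hH]
    have habs : |⟪v, (D (xt + sstar) - Ht) v⟫| ≤ (M * r + a / 48) * ‖v‖ ^ 2 := by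
      calc |⟪v, (D (xt + sstar) - Ht) v⟫| ≤ ‖v‖ * ‖(D (xt + sstar) - Ht) v‖ :=
            abs_real_inner_le_norm _ _
        _ ≤ ‖v‖ * (‖D (xt + sstar) - Ht‖ * ‖v‖) := by
            apply mul_le_mul_of_nonneg_left (ContinuousLinearMap.le_opNorm _ _) (norm_nonneg v)
        _ ≤ (M * r + a / 48) * ‖v‖ ^ 2 := by
            rw [pow_two]
            nlinarith [norm_nonneg v, hopn]
    have hsocv := hsoc' v
    have h48 : (47 / 48 * a) * ‖v‖ ^ 2 ≤ (3 / 2 * M * r) * ‖v‖ ^ 2 := by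
      rw [hdec] at hv
      have hlower : -((M * r + a / 48) * ‖v‖ ^ 2) ≤ ⟪v, (D (xt + sstar) - Ht) v⟫ :=
        neg_le_of_abs_le habs
      generalize hXg : (⟪v, (D (xt + sstar) - Ht) v⟫ : ℝ) = X at hv hlower
      generalize hYg : (⟪v, Ht v⟫ : ℝ) = Y at hv hsocv
      generalize hNg : ‖v‖ ^ 2 = n2 at hv hsocv hlower ⊢
      linarith only [hv, hsocv, hlower]
    have h49 : 47 / 48 * a ≤ 3 / 2 * M * r := le_of_mul_le_mul_right h48 hnv
    rw [hab] at h49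
    have h50 : M * (47 / 48 * b) ≤ M * (3 / 2 * r) := by linarith only [h49]
    have h51 := le_of_mul_le_mul_left h50 hM
    linarith only [h51, hb]
  · -- gradient case
    rw [not_le] at hg1
    have hE4 : gt + Ht sstar = -((M / 2 * r) • sstar) := by
      have := hfoc
      rw [add_eq_zero_iff_eq_neg] at this
      exact this
    have hE4n : ‖gt + Ht sstar‖ = M / 2 * r * r := by
      rw [hE4, norm_neg, norm_smul, Real.norm_eq_abs, abs_of_nonneg (by positivity)]
    have hid : gradient P (xt + sstar) =
        (gradient P (xt + sstar) - gradient P xt - (D xt) sstar) +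
        (gradient P xt - gt) + ((D xt - Ht) sstar) + (gt + Ht sstar) := by
      rw [ContinuousLinearMap.sub_apply]
      abel
    have hE3 : ‖(D xt - Ht) sstar‖ ≤ (a / 48) * r := by
      calc ‖(D xt - Ht) sstar‖ ≤ ‖D xt - Ht‖ * r := ContinuousLinearMap.le_opNorm _ _
        _ ≤ (a / 48) * r := by
            apply mul_le_mul_of_nonneg_right _ hr0
            linarith only [hH]
    have hnorm : ε < M * r * r + 1 / 192 * ε + a / 48 * r + M / 2 * r * r := by
      have h1 : ‖gradient P (xt + sstar)‖ ≤
          ‖gradient P (xt + sstar) - gradient P xt - (D xt) sstar‖ +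
          ‖gradient P xt - gt‖ + ‖(D xt - Ht) sstar‖ + ‖gt + Ht sstar‖ := by
        calc ‖gradient P (xt + sstar)‖ = ‖_ + _ + _ + _‖ := by rw [← hid]
          _ ≤ _ := by
            refine (norm_add_le _ _).trans (add_le_add ?_ le_rfl)
            refine (norm_add_le _ _).trans (add_le_add ?_ le_rfl)
            exact norm_add_le _ _
      rw [hE4n] at h1
      have := hg1.trans_le h1
      linarith only [hT, hg, hE3, this]
    by_contra hcon
    push_neg at hcon
    have h1 : r * r ≤ (1 / 2 * b) * (1 / 2 * b) :=
      mul_le_mul hcon.le hcon.le hr0 (by positivity)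
    have h2 : r * b ≤ (1 / 2 * b) * b := mul_le_mul_of_nonneg_right hcon.le hb.le
    have h3 := mul_le_mul_of_nonneg_left h1 hM.le
    have h4 := mul_le_mul_of_nonneg_left h2 hM.le
    rw [hab] at hnorm
    linarith only [hnorm, h3, h4, hε2, hε]
end

section
/- Let P be twice differentiable with M-Lipschitz Hessian and lower bounded by P*. Suppose for each t, ‖∇P(x_t) − g_t‖ ≤ C_g ε and ‖∇²P(x_t) − H_t‖ ≤ C_H √(Mε) with C_g = 1/192, C_H = 1/48, s_t* minimizes the cubic model m_t(s) = g_tᵀs + ½ sᵀH_t s + (M/6)‖s‖³, x_{t+1} = x_t + s_t*, and ‖s_t*‖ ≥ (1/2)√(ε/M). Then for each t, (1/192)√(ε³/M) ≤ P(x_t) − P(x_{t+1}); consequently the iteration count before termination is at most 192 (P(x_0) − P*) √M ε^{−3/2}. -/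
open RealInnerProductSpace

open Set

lemma taylor_ub {d : ℕ} {M : ℝ}
    (P : EuclideanSpace ℝ (Fin d) → ℝ) (hP : ContDiff ℝ 2 P)
    (hLip : ∀ x x', ‖fderiv ℝ (gradient P) x - fderiv ℝ (gradient P) x'‖ ≤ M * ‖x - x'‖)
    (x s : EuclideanSpace ℝ (Fin d)) :
    P (x + s) ≤ P x + ⟪gradient P x, s⟫ + 1 / 2 * ⟪s, fderiv ℝ (gradient P) x s⟫
      + M / 6 * ‖s‖ ^ 3 := by
  set G := gradient P with hGdef
  have hPdiff : Differentiable ℝ P := hP.differentiable (by norm_num)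
  have hGc : ContDiff ℝ 1 G := by
    have h1 : ContDiff ℝ 1 (fderiv ℝ P) := hP.fderiv_right (by norm_num)
    have h2 : G = fun y => (InnerProductSpace.toDual ℝ _).symm (fderiv ℝ P y) := rfl
    rw [h2]
    exact (InnerProductSpace.toDual ℝ _).symm.contDiff.comp h1
  have hGdiff : Differentiable ℝ G := hGc.differentiable one_ne_zero
  set Hx := fderiv ℝ G x with hHxdef
  have hcurve : ∀ τ : ℝ, HasDerivAt (fun τ : ℝ => x + τ • s) s τ := by
    intro τ
    simpa using ((hasDerivAt_id τ).smul_const s).const_add x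
  set f : ℝ → EuclideanSpace ℝ (Fin d) :=
    fun τ => G (x + τ • s) - G x - τ • (Hx s) with hfdef
  have hfd : ∀ τ : ℝ, HasDerivAt f (fderiv ℝ G (x + τ • s) s - Hx s) τ := by
    intro τ
    have h1 : HasDerivAt (fun τ : ℝ => G (x + τ • s)) (fderiv ℝ G (x + τ • s) s) τ :=
      (hGdiff _).hasFDerivAt.comp_hasDerivAt τ (hcurve τ)
    have h2 : HasDerivAt (fun τ : ℝ => τ • (Hx s)) (Hx s) τ := by
      simpa using (hasDerivAt_id τ).smul_const (Hx s)
    exact (h1.sub_const (G x)).sub h2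
  have hfbound : ∀ τ ∈ Ico (0:ℝ) 1, ‖fderiv ℝ G (x + τ • s) s - Hx s‖ ≤ M * ‖s‖ ^ 2 * τ := by
    intro τ hτ
    have h1 : fderiv ℝ G (x + τ • s) s - Hx s = (fderiv ℝ G (x + τ • s) - Hx) s := by simp
    have h2 : ‖x + τ • s - x‖ = τ * ‖s‖ := by
      rw [add_sub_cancel_left, norm_smul, Real.norm_eq_abs, abs_of_nonneg hτ.1]
    calc ‖fderiv ℝ G (x + τ • s) s - Hx s‖ = ‖(fderiv ℝ G (x + τ • s) - Hx) s‖ := by rw [h1]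
      _ ≤ ‖fderiv ℝ G (x + τ • s) - Hx‖ * ‖s‖ := ContinuousLinearMap.le_opNorm _ _
      _ ≤ (M * ‖x + τ • s - x‖) * ‖s‖ :=
          mul_le_mul_of_nonneg_right (hLip (x + τ • s) x) (norm_nonneg s)
      _ = M * ‖s‖ ^ 2 * τ := by rw [h2]; ring
  have hB : ∀ τ : ℝ, HasDerivAt (fun τ : ℝ => M * ‖s‖ ^ 2 / 2 * τ ^ 2) (M * ‖s‖ ^ 2 * τ) τ := by
    intro τ
    have := (hasDerivAt_pow 2 τ).const_mul (M * ‖s‖ ^ 2 / 2)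
    convert this using 1
    · rfl
    · rfl
    ring
  have hfA : ∀ τ ∈ Icc (0:ℝ) 1, ‖f τ‖ ≤ M * ‖s‖ ^ 2 / 2 * τ ^ 2 := by
    intro τ hτ
    refine image_norm_le_of_norm_deriv_right_le_deriv_boundary
      (f' := fun τ => fderiv ℝ G (x + τ • s) s - Hx s)
      (fun τ _ => (hfd τ).continuousAt.continuousWithinAt)
      (fun τ _ => (hfd τ).hasDerivWithinAt) ?_ hB hfbound hτ
    simp [hfdef]
  -- step B
  set q : ℝ → ℝ := fun τ => P (x + τ • s) - P x - τ * ⟪G x, s⟫ - τ ^ 2 / 2 * ⟪Hx s, s⟫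
    with hqdef
  have hqd : ∀ τ : ℝ, HasDerivAt q (⟪f τ, s⟫) τ := by
    intro τ
    have h1 : HasDerivAt (fun τ : ℝ => P (x + τ • s)) ⟪G (x + τ • s), s⟫ τ := by
      have h0 : HasGradientAt P (G (x + τ • s)) (x + τ • s) := (hPdiff _).hasGradientAt
      have := h0.hasFDerivAt.comp_hasDerivAt τ (hcurve τ)
      simp at this
      exact this
    have h2 : HasDerivAt (fun τ : ℝ => τ * ⟪G x, s⟫) ⟪G x, s⟫ τ := by
      simpa using (hasDerivAt_id τ).mul_const (⟪G x, s⟫ : ℝ)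
    have h3 : HasDerivAt (fun τ : ℝ => τ ^ 2 / 2 * ⟪Hx s, s⟫) (τ * ⟪Hx s, s⟫) τ := by
      have := ((hasDerivAt_pow 2 τ).div_const 2).mul_const (⟪Hx s, s⟫ : ℝ)
      convert this using 1
      · rfl
      · rfl
      ring
    have h4 : (⟪f τ, s⟫ : ℝ) = ⟪G (x + τ • s), s⟫ - ⟪G x, s⟫ - τ * ⟪Hx s, s⟫ := by
      simp [hfdef, inner_sub_left, real_inner_smul_left, Finset.mul_sum, mul_assoc]
    rw [h4]
    exact ((h1.sub_const (P x)).sub h2).sub h3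
  have hqbound : ∀ τ ∈ Ico (0:ℝ) 1, ‖(⟪f τ, s⟫ : ℝ)‖ ≤ M * ‖s‖ ^ 3 / 2 * τ ^ 2 := by
    intro τ hτ
    calc ‖(⟪f τ, s⟫ : ℝ)‖ ≤ ‖f τ‖ * ‖s‖ := norm_inner_le_norm _ _
      _ ≤ (M * ‖s‖ ^ 2 / 2 * τ ^ 2) * ‖s‖ :=
          mul_le_mul_of_nonneg_right (hfA τ (Ico_subset_Icc_self hτ)) (norm_nonneg s)
      _ = M * ‖s‖ ^ 3 / 2 * τ ^ 2 := by ring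
  have hB2 : ∀ τ : ℝ, HasDerivAt (fun τ : ℝ => M * ‖s‖ ^ 3 / 6 * τ ^ 3) (M * ‖s‖ ^ 3 / 2 * τ ^ 2) τ := by
    intro τ
    have := (hasDerivAt_pow 3 τ).const_mul (M * ‖s‖ ^ 3 / 6)
    convert this using 1
    · rfl
    · rfl
    ring
  have hq0 : ‖q 0‖ ≤ M * ‖s‖ ^ 3 / 6 * (0:ℝ) ^ 3 := by simp [hqdef]
  have hq1 : ‖q 1‖ ≤ M * ‖s‖ ^ 3 / 6 := by
    have := image_norm_le_of_norm_deriv_right_le_deriv_boundary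
      (f' := fun τ => (⟪f τ, s⟫ : ℝ))
      (fun τ _ => (hqd τ).continuousAt.continuousWithinAt)
      (fun τ _ => (hqd τ).hasDerivWithinAt) hq0 hB2 hqbound
        (right_mem_Icc.2 zero_le_one)
    simpa using this
  have hq1' : q 1 ≤ M * ‖s‖ ^ 3 / 6 := le_trans (le_abs_self _) hq1
  have hq1'' : q 1 = P (x + s) - P x - ⟪G x, s⟫ - 1 / 2 * ⟪Hx s, s⟫ := by
    simp [hqdef]
  have hcomm : (⟪Hx s, s⟫ : ℝ) = ⟪s, Hx s⟫ := real_inner_comm _ _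
  rw [hq1'', hcomm] at hq1'
  linarith


lemma model_decrease {d : ℕ} (g : EuclideanSpace ℝ (Fin d))
    (H : EuclideanSpace ℝ (Fin d) →L[ℝ] EuclideanSpace ℝ (Fin d)) (M : ℝ)
    (s : EuclideanSpace ℝ (Fin d))
    (hmin : ∀ s', cubicModel g H M s ≤ cubicModel g H M s') :
    cubicModel g H M s ≤ -(M / 12) * ‖s‖ ^ 3 := by
  set a : ℝ := ⟪g, s⟫ with ha
  set b : ℝ := ⟪s, H s⟫ with hb
  set c : ℝ := ‖s‖ with hc
  have heval : ∀ lam : ℝ, cubicModel g H M (lam • s)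
      = lam * a + lam ^ 2 * (b / 2) + |lam| ^ 3 * (M * c ^ 3 / 6) := by
    intro lam
    have h1 : (⟪g, lam • s⟫ : ℝ) = lam * a := real_inner_smul_right _ _ _
    have h2 : (⟪lam • s, H (lam • s)⟫ : ℝ) = lam ^ 2 * b := by
      rw [map_smul, real_inner_smul_left, real_inner_smul_right]
      ring
    have h3 : ‖lam • s‖ ^ 3 = |lam| ^ 3 * c ^ 3 := by
      rw [norm_smul, Real.norm_eq_abs, mul_pow]
    rw [cubicModel, h1, h2, h3]
    ring
  set φ : ℝ → ℝ := fun lam => cubicModel g H M (lam • s) with hφ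
  have hφ1 : φ 1 = cubicModel g H M s := by rw [hφ]; simp
  have hlocmin : IsLocalMin φ 1 := by
    refine Filter.Eventually.of_forall fun y => ?_
    rw [hφ1]
    exact hmin (y • s)
  set poly : ℝ → ℝ := fun lam => lam * a + lam ^ 2 * (b / 2) + lam ^ 3 * (M * c ^ 3 / 6)
    with hpoly
  have heq : φ =ᶠ[nhds 1] poly := by
    have hmem : Ioi (0:ℝ) ∈ nhds (1:ℝ) := Ioi_mem_nhds one_pos
    filter_upwards [hmem] with lam hlam
    show cubicModel g H M (lam • s) = lam * a + lam ^ 2 * (b / 2) + lam ^ 3 * (M * c ^ 3 / 6)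
    rw [heval lam, abs_of_pos hlam]
  have hpd : HasDerivAt poly (a + b + M * c ^ 3 / 2) 1 := by
    have h1 : HasDerivAt (fun lam : ℝ => lam * a) a 1 := by
      simpa using (hasDerivAt_id (1:ℝ)).mul_const a
    have h2 : HasDerivAt (fun lam : ℝ => lam ^ 2 * (b / 2)) b 1 := by
      have := (hasDerivAt_pow 2 (1:ℝ)).mul_const (b / 2)
      convert this using 1
      · rfl
      · rfl
      push_cast
      ring
    have h3 : HasDerivAt (fun lam : ℝ => lam ^ 3 * (M * c ^ 3 / 6)) (M * c ^ 3 / 2) 1 := by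
      have := (hasDerivAt_pow 3 (1:ℝ)).mul_const (M * c ^ 3 / 6)
      convert this using 1
      · rfl
      · rfl
      push_cast
      ring
    exact (h1.add h2).add h3
  have hderiv0 : a + b + M * c ^ 3 / 2 = 0 := by
    have h1 : deriv φ 1 = 0 := hlocmin.deriv_eq_zero
    have h2 : deriv φ 1 = deriv poly 1 := Filter.EventuallyEq.deriv_eq heq
    rw [h2, hpd.deriv] at h1
    exact h1
  have hneg : φ 1 ≤ φ (-1) := by rw [hφ1]; exact hmin _
  have hφ1' : φ 1 = a + b / 2 + M * c ^ 3 / 6 := by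
    show cubicModel g H M ((1:ℝ) • s) = _
    rw [heval]; simp
  have hφm1 : φ (-1) = -a + b / 2 + M * c ^ 3 / 6 := by
    show cubicModel g H M ((-1:ℝ) • s) = _
    rw [heval]; simp
  have hale : a ≤ 0 := by
    rw [hφ1', hφm1] at hneg; linarith
  rw [← hφ1, hφ1']
  nlinarith [hderiv0, hale]

theorem cubic_newton_descent_and_iteration_bound (d : ℕ) (M ε Pstar : ℝ)
    (hM : 0 < M) (hε : 0 < ε)
    (P : EuclideanSpace ℝ (Fin d) → ℝ) (hP : ContDiff ℝ 2 P)
    (hLip : ∀ x x', ‖fderiv ℝ (gradient P) x - fderiv ℝ (gradient P) x'‖ ≤ M * ‖x - x'‖)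
    (hlower : ∀ x, Pstar ≤ P x)
    (x : ℕ → EuclideanSpace ℝ (Fin d)) (g : ℕ → EuclideanSpace ℝ (Fin d))
    (H : ℕ → EuclideanSpace ℝ (Fin d) →L[ℝ] EuclideanSpace ℝ (Fin d))
    (s : ℕ → EuclideanSpace ℝ (Fin d))
    (hHSymm : ∀ t, ∀ u v, ⟪H t u, v⟫ = ⟪u, H t v⟫)
    (hg : ∀ t, ‖gradient P (x t) - g t‖ ≤ 1 / 192 * ε)
    (hH : ∀ t, ‖fderiv ℝ (gradient P) (x t) - H t‖ ≤ 1 / 48 * Real.sqrt (M * ε))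
    (hmin : ∀ t, ∀ s', cubicModel (g t) (H t) M (s t) ≤ cubicModel (g t) (H t) M s')
    (hstep : ∀ t, x (t + 1) = x t + s t)
    (hsnorm : ∀ t, 1 / 2 * Real.sqrt (ε / M) ≤ ‖s t‖) :
    (∀ t, 1 / 192 * Real.sqrt (ε ^ 3 / M) ≤ P (x t) - P (x (t + 1))) ∧
      ∀ T : ℕ, (T : ℝ) ≤ 192 * (P (x 0) - Pstar) * Real.sqrt M * ε ^ (-(3 : ℝ) / 2) := by
  -- abbreviations for the square roots
  set u : ℝ := Real.sqrt (ε / M) with hu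
  have hu0 : 0 < u := Real.sqrt_pos.2 (div_pos hε hM)
  have hu2 : ε = M * u ^ 2 := by
    rw [hu, Real.sq_sqrt (div_nonneg hε.le hM.le)]
    field_simp
  have hsME : Real.sqrt (M * ε) = M * u := by
    rw [show M * ε = (M * u) ^ 2 by rw [hu2]; ring]
    exact Real.sqrt_sq (by positivity)
  have hsE3 : Real.sqrt (ε ^ 3 / M) = M * u ^ 3 := by
    rw [show ε ^ 3 / M = (M * u ^ 3) ^ 2 by rw [hu2]; field_simp]
    exact Real.sqrt_sq (by positivity)
  -- part 1
  have main1 : ∀ t, 1 / 192 * Real.sqrt (ε ^ 3 / M) ≤ P (x t) - P (x (t + 1)) := by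
    intro t
    have htay := taylor_ub P hP hLip (x t) (s t)
    rw [← hstep t] at htay
    set Gx := gradient P (x t) with hGx
    set Hx := fderiv ℝ (gradient P) (x t) with hHx
    set r := ‖s t‖ with hr
    have hr0 : (0:ℝ) ≤ r := norm_nonneg _
    have e1 : (⟪Gx, s t⟫ : ℝ) = ⟪g t, s t⟫ + ⟪Gx - g t, s t⟫ := by
      rw [inner_sub_left]; ring
    have e2 : (⟪s t, Hx (s t)⟫ : ℝ) = ⟪s t, H t (s t)⟫ + ⟪s t, Hx (s t) - H t (s t)⟫ := by
      rw [inner_sub_right]; ring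
    have b1 : (⟪Gx - g t, s t⟫ : ℝ) ≤ 1 / 192 * ε * r := by
      calc (⟪Gx - g t, s t⟫ : ℝ) ≤ ‖Gx - g t‖ * ‖s t‖ := real_inner_le_norm _ _
        _ ≤ 1 / 192 * ε * r := mul_le_mul_of_nonneg_right (hg t) hr0
    have b2 : (⟪s t, Hx (s t) - H t (s t)⟫ : ℝ) ≤ 1 / 48 * Real.sqrt (M * ε) * r ^ 2 := by
      calc (⟪s t, Hx (s t) - H t (s t)⟫ : ℝ)
          ≤ ‖s t‖ * ‖Hx (s t) - H t (s t)‖ := real_inner_le_norm _ _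
        _ = ‖s t‖ * ‖(Hx - H t) (s t)‖ := by rw [ContinuousLinearMap.sub_apply]
        _ ≤ ‖s t‖ * (‖Hx - H t‖ * ‖s t‖) :=
            mul_le_mul_of_nonneg_left (ContinuousLinearMap.le_opNorm _ _) hr0
        _ ≤ ‖s t‖ * (1 / 48 * Real.sqrt (M * ε) * ‖s t‖) := by
            apply mul_le_mul_of_nonneg_left _ hr0
            exact mul_le_mul_of_nonneg_right (hH t) hr0
        _ = 1 / 48 * Real.sqrt (M * ε) * r ^ 2 := by ring
    have bm : (⟪g t, s t⟫ : ℝ) + 1 / 2 * ⟪s t, H t (s t)⟫ + M / 6 * r ^ 3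
        ≤ -(M / 12) * r ^ 3 := by
      have := model_decrease (g t) (H t) M (s t) (hmin t)
      rw [cubicModel] at this
      exact this
    have hkey : P (x (t + 1)) - P (x t)
        ≤ -(M / 12) * r ^ 3 + 1 / 192 * ε * r + 1 / 96 * Real.sqrt (M * ε) * r ^ 2 := by
      rw [e1, e2] at htay
      linarith
    have hru : u / 2 ≤ r := by
      have h := hsnorm t; rw [← hr] at h; linarith
    rw [hsE3]
    have hfact : 0 ≤ M * ((r - u / 2) * (16 * r ^ 2 + 6 * u * r + 2 * u ^ 2)) := by
      apply mul_nonneg hM.le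
      apply mul_nonneg (by linarith)
      nlinarith [sq_nonneg r, sq_nonneg u, mul_nonneg hu0.le hr0]
    rw [hsME, hu2] at hkey
    nlinarith [hkey, hfact]
  refine ⟨main1, ?_⟩
  -- part 2
  set Δ : ℝ := 1 / 192 * Real.sqrt (ε ^ 3 / M) with hΔ
  have hΔ0 : 0 < Δ := by rw [hΔ, hsE3]; positivity
  have tel : ∀ T : ℕ, (T : ℝ) * Δ ≤ P (x 0) - P (x T) := by
    intro T
    induction T with
    | zero => simp
    | succ n ih =>
        have h1 := main1 n
        push_cast
        linarith
  intro T
  set C : ℝ := P (x 0) - Pstar with hC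
  have hT : (T : ℝ) * Δ ≤ C := le_trans (tel T) (by have := hlower (x T); rw [hC]; linarith)
  -- the closed form of the bound
  have e1 : Real.sqrt (ε ^ 3) = ε ^ ((3:ℝ) / 2) := by
    rw [Real.sqrt_eq_rpow, ← Real.rpow_natCast ε 3, ← Real.rpow_mul hε.le]
    norm_num
  have e2 : ε ^ (-(3:ℝ) / 2) = (Real.sqrt (ε ^ 3))⁻¹ := by
    rw [e1, show (-(3:ℝ) / 2) = -((3:ℝ)/2) by ring, Real.rpow_neg hε.le]
  have hsqM : (0:ℝ) < Real.sqrt M := Real.sqrt_pos.2 hM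
  have hsqE3 : (0:ℝ) < Real.sqrt (ε ^ 3) := Real.sqrt_pos.2 (by positivity)
  have hsq : Real.sqrt (ε ^ 3 / M) * (Real.sqrt M * ε ^ (-(3:ℝ) / 2)) = 1 := by
    rw [Real.sqrt_div (by positivity : (0:ℝ) ≤ ε ^ 3) M, e2]
    field_simp
  have hRΔ : (192 * C * Real.sqrt M * ε ^ (-(3:ℝ) / 2)) * Δ = C := by
    calc (192 * C * Real.sqrt M * ε ^ (-(3:ℝ) / 2)) * Δ
        = C * (Real.sqrt (ε ^ 3 / M) * (Real.sqrt M * ε ^ (-(3:ℝ) / 2))) := by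
          rw [hΔ]; ring
      _ = C := by rw [hsq]; ring
  have hR : 192 * C * Real.sqrt M * ε ^ (-(3:ℝ) / 2) = C / Δ :=
    (eq_div_iff hΔ0.ne').2 hRΔ
  calc (T:ℝ) ≤ C / Δ := (le_div_iff₀ hΔ0).2 hT
    _ = 192 * C * Real.sqrt M * ε ^ (-(3:ℝ) / 2) := hR.symm
    _ = 192 * (P (x 0) - Pstar) * Real.sqrt M * ε ^ (-(3:ℝ) / 2) := by rw [hC]
end
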